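/- Theorem 6 (time-averaged second-order correlation of a block-i.i.d. energy sequence): with the spliced energy sequence E_n = B_{n / M_s} (n mod M_s), for every integer delay τ > 0 the time-averaged correlation R̄(τ) = (1/M_s) · ∑_{w=0}^{M_s−1} E[E_w · E_{w+τ}] satisfies: R̄(τ) = (τ·P² + (M_s − τ)·ρ)/M_s if τ < M_s, and R̄(τ) = P² if τ ≥ M_s. -/

import Mathlib

open MeasureTheory ProbabilityTheory

/-- Theorem 6 (time-averaged second-order correlation of a block-i.i.d. energy
sequence): splicing i.i.d. shaped blocks of length `M_s` with per-position mean `P`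
and off-diagonal intra-block correlation `ρ`, for every delay `τ > 0` the
time-averaged correlation equals `(τ·P² + (M_s − τ)·ρ)/M_s` if `τ < M_s`
and `P²` if `τ ≥ M_s`. -/
theorem timeAvg_second_order_corr
    {Ω : Type*} [MeasureSpace Ω] [IsProbabilityMeasure (ℙ : Measure Ω)]
    (Ms : ℕ) (hMs : 0 < Ms) (P ρ : ℝ)
    (B : ℕ → Ω → (Fin Ms → ℝ))
    (hmeas : ∀ k, Measurable (B k))
    (hindep : iIndepFun B ℙ)
    (hident : ∀ k, IdentDistrib (B k) (B 0) ℙ ℙ)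
    (hint1 : ∀ k (i : Fin Ms), Integrable (fun ω => B k ω i) ℙ)
    (hint2 : ∀ k k' (i j : Fin Ms), Integrable (fun ω => B k ω i * B k' ω j) ℙ)
    (hint3 : ∀ k k' k'' (i j l : Fin Ms),
      Integrable (fun ω => B k ω i * B k' ω j * B k'' ω l) ℙ)
    (hmean : ∀ k (i : Fin Ms), (∫ ω, B k ω i ∂ℙ) = P)
    (hpair : ∀ k (i j : Fin Ms), i ≠ j → (∫ ω, B k ω i * B k ω j ∂ℙ) = ρ)
    (E : ℕ → Ω → ℝ)
    (hE : ∀ n ω, E n ω = B (n / Ms) ω ⟨n % Ms, Nat.mod_lt n hMs⟩)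
    (τ : ℕ) (hτ : 0 < τ) :
    (1 / (Ms : ℝ)) * ∑ w ∈ Finset.range Ms, ∫ ω, E w ω * E (w + τ) ω ∂ℙ
      = if τ < Ms then ((τ : ℝ) * P ^ 2 + ((Ms : ℝ) - (τ : ℝ)) * ρ) / (Ms : ℝ)
        else P ^ 2 := by
  have hMsR : (Ms : ℝ) ≠ 0 := Nat.cast_ne_zero.mpr hMs.ne'
  -- cross-block lemma
  have hcross : ∀ k (i j : Fin Ms), k ≠ 0 →
      (∫ ω, B 0 ω i * B k ω j ∂ℙ) = P ^ 2 := by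
    intro k i j hk
    have hind : IndepFun (B 0) (B k) ℙ := hindep.indepFun (Ne.symm hk)
    have hind2 : IndepFun (fun ω => B 0 ω i) (fun ω => B k ω j) ℙ :=
      hind.comp (measurable_pi_apply i) (measurable_pi_apply j)
    have h := hind2.integral_fun_mul_eq_mul_integral (hint1 0 i).1 (hint1 k j).1
    rw [hmean, hmean] at h
    rw [sq]
    exact h
  -- value of each term
  have hterm : ∀ w ∈ Finset.range Ms,
      (∫ ω, E w ω * E (w + τ) ω ∂ℙ) = if w + τ < Ms then ρ else P ^ 2 := by
    intro w hw
    rw [Finset.mem_range] at hw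
    have hwd : w / Ms = 0 := Nat.div_eq_of_lt hw
    have hwm : w % Ms = w := Nat.mod_eq_of_lt hw
    simp only [hE]
    by_cases h : w + τ < Ms
    · have hd : (w + τ) / Ms = 0 := Nat.div_eq_of_lt h
      have hm : (w + τ) % Ms = w + τ := Nat.mod_eq_of_lt h
      simp only [h, if_pos]
      rw [show (⟨w % Ms, Nat.mod_lt w hMs⟩ : Fin Ms) = ⟨w, hw⟩ from Fin.ext hwm,
        show (⟨(w + τ) % Ms, Nat.mod_lt _ hMs⟩ : Fin Ms) = ⟨w + τ, h⟩ from Fin.ext hm,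
        hwd, hd]
      exact hpair 0 _ _ (by simp [Fin.ext_iff]; omega)
    · have hk : (w + τ) / Ms ≠ 0 := by
        have h1 : 1 ≤ (w + τ) / Ms := (Nat.one_le_div_iff hMs).mpr (le_of_not_gt h)
        omega
      rw [if_neg h, hwd]
      exact hcross _ _ _ hk
  rw [Finset.sum_congr rfl hterm]
  by_cases hτMs : τ < Ms
  · rw [if_pos hτMs]
    have hsplit : ∀ w, w + τ < Ms ↔ w < Ms - τ := by intro w; omega
    have : ∑ w ∈ Finset.range Ms, (if w + τ < Ms then ρ else P ^ 2)
        = ∑ w ∈ Finset.range Ms, (if w < Ms - τ then ρ else P ^ 2) := by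
      exact Finset.sum_congr rfl fun w _ => if_congr (hsplit w) rfl rfl
    rw [this]
    have hle : Ms - τ ≤ Ms := Nat.sub_le _ _
    rw [Finset.range_eq_Ico, ← Finset.sum_Ico_consecutive _ (Nat.zero_le (Ms - τ)) hle]
    have h1 : ∑ w ∈ Finset.Ico 0 (Ms - τ), (if w < Ms - τ then ρ else P ^ 2)
        = ((Ms - τ : ℕ) : ℝ) * ρ := by
      rw [Finset.sum_congr rfl (fun w hw => if_pos (Finset.mem_Ico.mp hw).2),
        Finset.sum_const, Nat.card_Ico, nsmul_eq_mul, Nat.sub_zero]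
    have h2 : ∑ w ∈ Finset.Ico (Ms - τ) Ms, (if w < Ms - τ then ρ else P ^ 2)
        = ((τ : ℕ) : ℝ) * P ^ 2 := by
      rw [Finset.sum_congr rfl
        (fun w hw => if_neg (by have := (Finset.mem_Ico.mp hw).1; omega)),
        Finset.sum_const, Nat.card_Ico, nsmul_eq_mul]
      congr 1
      have : Ms - (Ms - τ) = τ := by omega
      rw [this]
    rw [h1, h2, Nat.cast_sub hτMs.le]
    field_simp
    ring
  · rw [if_neg hτMs]
    have : ∑ w ∈ Finset.range Ms, (if w + τ < Ms then ρ else P ^ 2)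
        = ∑ w ∈ Finset.range Ms, P ^ 2 := by
      refine Finset.sum_congr rfl fun w _ => if_neg (by omega)
    rw [this, Finset.sum_const, Finset.card_range, nsmul_eq_mul]
    field_simp
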